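/- Let u : Fin n → Fin n → R be a matrix over a commutative ring R and for each column m and each i ∈ Fin n define the 2×2 matrix A_{i,1}^{[m]} = [[0,0],[u(i,m),0]] and A_{i,0}^{[m]} = identity. Define 𝒜^{[m]} = Σ over bit strings σ ∈ {0,1}^n with exactly one 1 of A_{1,σ_1}^{[m]} ⊗ ⋯ ⊗ A_{n,σ_n}^{[m]}, a 2^n × 2^n matrix. Then the entry of the product 𝒜^{[1]} · 𝒜^{[2]} · ⋯ · 𝒜^{[n]} in position (bottom-left), i.e. at row index (1,1,...,1) and column index (0,0,...,0) in bit-string indexing, equals the permanent of the matrix (u(i,m))_{i,m}. -/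

import Mathlib

/-- Kronecker product of `n` 2×2 matrices, indexed by bit strings of length `n`. -/
def kron {n : ℕ} {R : Type*} [CommRing R] (M : Fin n → Matrix (Fin 2) (Fin 2) R) :
    Matrix (Fin n → Fin 2) (Fin n → Fin 2) R :=
  Matrix.of fun p q => ∏ k, M k (p k) (q k)

/-- The operator-basis tensor `𝒜^[m]`: sum over bit strings with exactly one `1` of the
Kronecker product placing the nilpotent block with entry `u i m` in factor `i`. -/
def opA {n : ℕ} {R : Type*} [CommRing R] (u : Fin n → Fin n → R) (m : Fin n) :
    Matrix (Fin n → Fin 2) (Fin n → Fin 2) R :=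
  ∑ σ ∈ Finset.univ.filter
      (fun σ : Fin n → Fin 2 => (Finset.univ.filter (fun k => σ k = 1)).card = 1),
    kron (fun k => if σ k = 1 then (!![0, 0; u k m, 0] : Matrix (Fin 2) (Fin 2) R) else 1)

lemma fin2_eq_zero (a : Fin 2) (h : a ≠ 1) : a = 0 := by omega

lemma Eentry {R : Type*} [CommRing R] (c : R) (a b : Fin 2) :
    (!![0,0;c,0] : Matrix (Fin 2) (Fin 2) R) a b = if a = 1 ∧ b = 0 then c else 0 := by
  fin_cases a <;> fin_cases b <;> simp

lemma opA_apply {n : ℕ} {R : Type*} [CommRing R] (u : Fin n → Fin n → R) (m : Fin n)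
    (p r : Fin n → Fin 2) :
    opA u m p r = ∑ i : Fin n,
      if p i = 1 ∧ r = Function.update p i 0 then u i m else 0 := by
  classical
  have hset : (Finset.univ.filter
      (fun σ : Fin n → Fin 2 => (Finset.univ.filter (fun k => σ k = 1)).card = 1))
      = Finset.image (fun i : Fin n => (fun k => if k = i then 1 else 0 : Fin n → Fin 2))
          Finset.univ := by
    ext σ
    simp only [Finset.mem_filter, Finset.mem_univ, true_and, Finset.mem_image]
    constructor
    · intro h
      obtain ⟨i, hi⟩ := Finset.card_eq_one.mp h
      refine ⟨i, ?_⟩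
      funext k
      have hk : σ k = 1 ↔ k = i := by
        have := Finset.ext_iff.mp hi k
        simpa using this
      by_cases hki : k = i
      · rw [if_pos hki]; exact (hk.mpr hki).symm
      · rw [if_neg hki]
        exact (fin2_eq_zero _ (fun h1 => hki (hk.mp h1))).symm
    · rintro ⟨i, -, rfl⟩
      have : (Finset.univ.filter fun k => (if k = i then (1:Fin 2) else 0) = 1) = {i} := by
        ext k; by_cases hk : k = i <;> simp [hk]
      rw [this]; simp
  have hinj : Function.Injective
      (fun i : Fin n => (fun k => if k = i then 1 else 0 : Fin n → Fin 2)) := by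
    intro a b hab
    have h2 : (if a = a then (1:Fin 2) else 0) = if a = b then 1 else 0 := congrFun hab a
    by_contra hne
    rw [if_pos rfl, if_neg hne] at h2
    exact one_ne_zero h2
  rw [opA, hset, Finset.sum_image (fun a _ b _ h => hinj h), Matrix.sum_apply]
  refine Finset.sum_congr rfl fun i _ => ?_
  have hk : ∀ k, ((if (if k = i then (1:Fin 2) else 0) = 1
      then (!![0, 0; u k m, 0] : Matrix (Fin 2) (Fin 2) R) else 1))
      = if k = i then !![0, 0; u k m, 0] else 1 := by
    intro k; by_cases hki : k = i <;> simp [hki]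
  show (∏ k, (if (if k = i then (1:Fin 2) else 0) = 1
      then (!![0, 0; u k m, 0] : Matrix (Fin 2) (Fin 2) R) else 1) (p k) (r k)) = _
  simp only [hk]
  by_cases h : p i = 1 ∧ r = Function.update p i 0
  · rw [if_pos h]
    obtain ⟨h1, h2⟩ := h
    subst h2
    rw [Finset.prod_eq_single i]
    · rw [if_pos rfl, Eentry, if_pos ⟨h1, by simp⟩]
    · intro k _ hki
      rw [if_neg hki, Matrix.one_apply, if_pos (by simp [Function.update_of_ne hki])]
    · simp
  · rw [if_neg h]
    push_neg at h
    by_cases h1 : p i = 1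
    · have h2 := h h1
      by_cases h3 : r i = 0
      · -- there is k ≠ i with r k ≠ p k
        have : ∃ k, r k ≠ Function.update p i 0 k := by
          by_contra hc; push_neg at hc; exact h2 (funext hc)
        obtain ⟨k, hk2⟩ := this
        have hki : k ≠ i := by rintro rfl; simp [h3] at hk2
        rw [Function.update_of_ne hki] at hk2
        refine Finset.prod_eq_zero (Finset.mem_univ k) ?_
        rw [if_neg hki, Matrix.one_apply, if_neg (fun h' => hk2 h'.symm)]
      · refine Finset.prod_eq_zero (Finset.mem_univ i) ?_
        rw [if_pos rfl, Eentry, if_neg (by tauto)]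
    · refine Finset.prod_eq_zero (Finset.mem_univ i) ?_
      rw [if_pos rfl, Eentry, if_neg (by tauto)]

lemma opA_mul_apply {n : ℕ} {R : Type*} [CommRing R] (u : Fin n → Fin n → R) (m : Fin n)
    (B : Matrix (Fin n → Fin 2) (Fin n → Fin 2) R) (p q : Fin n → Fin 2) :
    (opA u m * B) p q = ∑ i : Fin n,
      if p i = 1 then u i m * B (Function.update p i 0) q else 0 := by
  rw [Matrix.mul_apply]
  simp only [opA_apply, Finset.sum_mul]
  rw [Finset.sum_comm]
  refine Finset.sum_congr rfl fun i _ => ?_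
  by_cases h : p i = 1
  · rw [if_pos h, Finset.sum_eq_single (Function.update p i 0)]
    · rw [if_pos ⟨h, rfl⟩]
    · intro r _ hr; rw [if_neg (fun hc => hr hc.2), zero_mul]
    · simp
  · rw [if_neg h]
    refine Finset.sum_eq_zero fun r _ => ?_
    rw [if_neg (fun hc => h hc.1), zero_mul]

lemma cons_cond_iff {n k : ℕ} (p : Fin n → Fin 2) (i : Fin n) (g : Fin k → Fin n) :
    (Function.Injective (Fin.cons i g : Fin (k+1) → Fin n) ∧
      ∀ a, p a = 1 ↔ ∃ j, (Fin.cons i g : Fin (k+1) → Fin n) j = a)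
    ↔ (p i = 1 ∧ Function.Injective g ∧
      ∀ a, Function.update p i 0 a = 1 ↔ ∃ j, g j = a) := by
  rw [Fin.cons_injective_iff]
  constructor
  · rintro ⟨⟨hir, hginj⟩, hcov⟩
    have hpi : p i = 1 := (hcov i).2 ⟨0, Fin.cons_zero _ _⟩
    refine ⟨hpi, hginj, fun a => ?_⟩
    by_cases ha : a = i
    · subst ha
      rw [Function.update_self]
      exact ⟨fun h0 => absurd h0 (by decide), fun ⟨j, hj⟩ => absurd ⟨j, hj⟩ hir⟩
    · rw [Function.update_of_ne ha, hcov a]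
      constructor
      · rintro ⟨j, hj⟩
        induction j using Fin.cases with
        | zero => rw [Fin.cons_zero] at hj; exact absurd hj.symm ha
        | succ j' => exact ⟨j', by rwa [Fin.cons_succ] at hj⟩
      · rintro ⟨j, hj⟩; exact ⟨j.succ, by rwa [Fin.cons_succ]⟩
  · rintro ⟨hpi, hginj, hcov⟩
    have hir : i ∉ Set.range g := by
      rintro ⟨j, hj⟩
      have h2 := (hcov i).2 ⟨j, hj⟩
      rw [Function.update_self] at h2
      exact absurd h2 (by decide)
    refine ⟨⟨hir, hginj⟩, fun a => ?_⟩
    by_cases ha : a = i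
    · subst ha
      exact ⟨fun _ => ⟨0, Fin.cons_zero _ _⟩, fun _ => hpi⟩
    · have h3 := hcov a
      rw [Function.update_of_ne ha] at h3
      rw [h3]
      constructor
      · rintro ⟨j, hj⟩; exact ⟨j.succ, by rwa [Fin.cons_succ]⟩
      · rintro ⟨j, hj⟩
        induction j using Fin.cases with
        | zero => rw [Fin.cons_zero] at hj; exact absurd hj.symm ha
        | succ j' => exact ⟨j', by rwa [Fin.cons_succ] at hj⟩

lemma key {n : ℕ} {R : Type*} [CommRing R] (u : Fin n → Fin n → R) :
    ∀ (k : ℕ) (c : Fin k → Fin n) (p : Fin n → Fin 2),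
    ((List.ofFn (fun j => opA u (c j))).prod) p (fun _ => 0) =
      ∑ f : Fin k → Fin n,
        if (Function.Injective f ∧ ∀ i, p i = 1 ↔ ∃ j, f j = i)
        then ∏ j, u (f j) (c j) else 0
  | 0, c, p => by
    simp only [List.ofFn_zero, List.prod_nil]
    have huniv : (Finset.univ : Finset (Fin 0 → Fin n)) = {fun j => j.elim0} := by
      ext f
      simp only [Finset.mem_univ, Finset.mem_singleton, true_iff]
      funext j; exact j.elim0
    rw [Matrix.one_apply, huniv, Finset.sum_singleton]
    by_cases hp : p = fun _ => 0
    · rw [if_pos hp]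
      have hcn : Function.Injective (fun j : Fin 0 => (j.elim0 : Fin n)) ∧
          ∀ i, p i = 1 ↔ ∃ j : Fin 0, j.elim0 = i := by
        refine ⟨fun a => a.elim0, fun i => ⟨fun h1 => ?_, fun ⟨j, _⟩ => j.elim0⟩⟩
        rw [hp] at h1; simp at h1
      rw [if_pos hcn, Finset.univ_eq_empty, Finset.prod_empty]
    · rw [if_neg hp, if_neg]
      rintro ⟨-, hcov⟩
      refine hp (funext fun i => fin2_eq_zero _ fun h1 => ?_)
      obtain ⟨j, -⟩ := (hcov i).1 h1
      exact j.elim0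
  | (k+1), c, p => by
    rw [List.ofFn_succ, List.prod_cons, opA_mul_apply]
    have step : ∀ i : Fin n,
        (if p i = 1 then u i (c 0) *
            ((List.ofFn fun j : Fin k => opA u (c j.succ)).prod) (Function.update p i 0)
              (fun _ => 0) else 0)
        = ∑ g : Fin k → Fin n,
            if p i = 1 ∧ Function.Injective g ∧
              (∀ a, Function.update p i 0 a = 1 ↔ ∃ j, g j = a)
            then u i (c 0) * ∏ j, u (g j) (c j.succ) else 0 := by
      intro i
      by_cases h : p i = 1
      · rw [if_pos h, key u k (fun j => c j.succ) (Function.update p i 0), Finset.mul_sum]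
        refine Finset.sum_congr rfl fun g _ => ?_
        rw [mul_ite, mul_zero]
        by_cases hg : Function.Injective g ∧ ∀ a, Function.update p i 0 a = 1 ↔ ∃ j, g j = a
        · rw [if_pos hg, if_pos ⟨h, hg.1, hg.2⟩]
        · rw [if_neg hg, if_neg (fun hc => hg ⟨hc.2.1, hc.2.2⟩)]
      · rw [if_neg h]
        exact (Finset.sum_eq_zero fun g _ => if_neg (fun hc => h hc.1)).symm
    refine Eq.trans (Finset.sum_congr rfl fun i _ => step i) ?_
    rw [← Equiv.sum_comp (Fin.consEquiv (fun _ : Fin (k+1) => Fin n))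
      (fun f : Fin (k+1) → Fin n =>
        if (Function.Injective f ∧ ∀ i, p i = 1 ↔ ∃ j, f j = i)
        then ∏ j, u (f j) (c j) else 0), Fintype.sum_prod_type]
    refine Finset.sum_congr rfl fun i _ => Finset.sum_congr rfl fun g _ => ?_
    have hsymm : (Fin.consEquiv (fun _ : Fin (k+1) => Fin n)) (i, g) = Fin.cons i g := rfl
    rw [hsymm]
    by_cases hc : p i = 1 ∧ Function.Injective g ∧
        ∀ a, Function.update p i 0 a = 1 ↔ ∃ j, g j = a
    · rw [if_pos hc, if_pos ((cons_cond_iff p i g).mpr hc), Fin.prod_univ_succ,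
        Fin.cons_zero]
      simp only [Fin.cons_succ]
    · rw [if_neg hc, if_neg (fun h => hc ((cons_cond_iff p i g).mp h))]

theorem opA_prod_entry_eq_permanent (n : ℕ) (R : Type*) [CommRing R]
    (u : Fin n → Fin n → R) :
    ((List.ofFn (fun m : Fin n => opA u m)).prod) (fun _ => 1) (fun _ => 0) =
      ∑ σ : Equiv.Perm (Fin n), ∏ i, u i (σ i) := by
  rw [show (List.ofFn fun m : Fin n => opA u m)
      = List.ofFn (fun j : Fin n => opA u (id j)) from rfl,
    key u n id (fun _ => 1), ← Finset.sum_filter]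
  have step1 : (∑ f ∈ Finset.univ.filter (fun f : Fin n → Fin n =>
      Function.Injective f ∧ ∀ i, (1:Fin 2) = 1 ↔ ∃ j, f j = i), ∏ j, u (f j) (id j))
      = ∑ σ : Equiv.Perm (Fin n), ∏ j, u (σ j) j := by
    refine Finset.sum_bij (fun f hf => Equiv.ofBijective f
        ⟨(Finset.mem_filter.mp hf).2.1,
         fun i => ((Finset.mem_filter.mp hf).2.2 i).mp rfl⟩)
      (fun _ _ => Finset.mem_univ _) ?_ ?_ ?_
    · intro f hf g hg h
      funext a
      exact congrFun (congrArg (fun e : Equiv.Perm (Fin n) => (e : Fin n → Fin n)) h) a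
    · intro σ _
      refine ⟨σ, Finset.mem_filter.mpr ⟨Finset.mem_univ _, σ.injective,
        fun i => ⟨fun _ => ⟨σ.symm i, σ.apply_symm_apply i⟩, fun _ => rfl⟩⟩, ?_⟩
      exact Equiv.ext fun a => rfl
    · intro f hf; rfl
  rw [step1]
  refine Fintype.sum_equiv (Equiv.inv (Equiv.Perm (Fin n))) _ _ fun σ => ?_
  rw [← Equiv.prod_comp σ (fun i => u i ((Equiv.inv (Equiv.Perm (Fin n)) σ) i))]
  simp
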